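/- For every real α with 0 < α < √2 − 1 there exists a constant c < 1 such that the following holds for all sufficiently large even n. Let H_n be the complete bipartite graph on [n] with parts A and B where |A| = ⌈αn⌉ and |B| = n − ⌈αn⌉. Then the probability that H_n ∪ G_{n,1} contains a Hamilton cycle is at most c. -/

import Mathlib

open Filter

/-- A simple graph is `d`-regular: every vertex has exactly `d` neighbours. -/
def IsRegularGraph {n : ℕ} (G : SimpleGraph (Fin n)) (d : ℕ) : Prop :=
  ∀ v : Fin n, (G.neighborSet v).ncard = d

/-- The probability, under the uniform distribution on the (finite) set of `d`-regular
simple graphs on the vertex set `[n] = Fin n`, that the random graph satisfies `p`. -/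
noncomputable def probReg (n d : ℕ) (p : SimpleGraph (Fin n) → Prop) : ℝ :=
  (Nat.card {G : SimpleGraph (Fin n) // IsRegularGraph G d ∧ p G} : ℝ) /
    (Nat.card {G : SimpleGraph (Fin n) // IsRegularGraph G d} : ℝ)

/-- The complete bipartite graph on `Fin n` with parts `{v : ↑v < a}` and `{v : ↑v ≥ a}`. -/
def completeBip (n a : ℕ) : SimpleGraph (Fin n) where
  Adj u v := ((u : ℕ) < a) ≠ ((v : ℕ) < a)
  symm := ⟨fun _ _ h => Ne.symm h⟩
  loopless := ⟨fun _ h => h rfl⟩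

namespace Stmt13
lemma countP_split {α : Type*} (l : List α) (p q : α → Bool) :
    l.countP p = l.countP (fun x => p x && q x) + l.countP (fun x => p x && !q x) := by
  induction l with
  | nil => simp
  | cons x l ih =>
      simp only [List.countP_cons, ih]
      cases hp : p x <;> cases hq : q x <;> simp <;> omega
lemma coe_eq_univ_val {n : ℕ} (l : List (Fin n)) (h : ∀ x, l.count x = 1) :
    (l : Multiset (Fin n)) = Finset.univ.val := by
  ext x
  rw [Multiset.coe_count, h x]
  exact (Multiset.count_eq_one_of_mem Finset.univ.nodup (Finset.mem_univ x)).symm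
lemma countP_of_count_one {n : ℕ} (l : List (Fin n)) (h : ∀ x, l.count x = 1)
    (p : Fin n → Prop) [DecidablePred p] :
    l.countP (fun x => decide (p x)) = (Finset.univ.filter p).card := by
  rw [← Multiset.coe_countP, coe_eq_univ_val l h, Multiset.countP_eq_card_filter,
    ← Finset.filter_val, ← Finset.card_def]

lemma ham_bb {n a : ℕ} (G : SimpleGraph (Fin n)) {v : Fin n}
    {w : (completeBip n a ⊔ G).Walk v v} (hw : w.IsHamiltonianCycle) :
    n - 2 * a ≤ {e : Sym2 (Fin n) | e ∈ G.edgeSet ∧ ∀ x ∈ e, a ≤ (x : ℕ)}.ncard := by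
  classical
  set pB : Fin n → Bool := fun x => decide (a ≤ (x : ℕ)) with hpB
  have hnotnil : ¬ w.Nil := hw.isCycle.not_nil
  have htail : ∀ x, w.support.tail.count x = 1 := by
    intro x
    have h := hw.isHamiltonian_tail x
    rwa [SimpleGraph.Walk.support_tail_of_not_nil w hnotnil] at h
  have hdrop : ∀ x, w.support.dropLast.count x = 1 := by
    have h1 : w.support.dropLast ++ [v] = w.support := by
      have h := List.dropLast_append_getLast (l := w.support) (by simp)
      rwa [SimpleGraph.Walk.getLast_support] at h
    have h2 : w.support = v :: w.support.tail := w.support_eq_cons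
    intro x
    have e1 := congrArg (List.count x) h1
    rw [List.count_append] at e1
    have e2 := congrArg (List.count x) h2
    rw [List.count_cons] at e2
    have e3 := htail x
    by_cases hxv : v = x
    · simp only [List.count_singleton, hxv, beq_self_eq_true, if_true] at e1 e2
      omega
    · simp only [List.count_singleton, beq_iff_eq, if_neg hxv] at e1 e2
      omega
  set L := w.darts with hL
  set Bcard := (Finset.univ.filter (fun x : Fin n => a ≤ (x : ℕ))).card with hBcard
  set Acard := (Finset.univ.filter (fun x : Fin n => ¬ a ≤ (x : ℕ))).card with hAcard
  have c1 : L.countP (fun d => pB d.fst) = Bcard := by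
    have h := List.countP_map (f := fun d : (completeBip n a ⊔ G).Dart => d.fst) (l := L) (p := pB)
    rw [SimpleGraph.Walk.map_fst_darts] at h
    rw [show (fun d : (completeBip n a ⊔ G).Dart => pB d.fst) = (pB ∘ (·.fst)) from rfl, ← h]
    exact countP_of_count_one _ hdrop _
  have c2 : L.countP (fun d => !pB d.snd) = Acard := by
    have h := List.countP_map (f := fun d : (completeBip n a ⊔ G).Dart => d.snd) (l := L) (p := fun x => !pB x)
    rw [SimpleGraph.Walk.map_snd_darts] at h
    rw [show (fun d : (completeBip n a ⊔ G).Dart => !pB d.snd) = ((fun x => !pB x) ∘ (·.snd)) from rfl, ← h]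
    have : (fun x : Fin n => !pB x) = fun x : Fin n => decide (¬ a ≤ (x : ℕ)) := by
      funext x; by_cases h : a ≤ (x : ℕ) <;> simp [hpB, h]
    rw [this]
    exact countP_of_count_one _ htail _
  have hsplit := countP_split L (fun d => pB d.fst) (fun d => pB d.snd)
  set cntBB := L.countP (fun d => pB d.fst && pB d.snd) with hcntBB
  have hBA : L.countP (fun d => pB d.fst && !pB d.snd) ≤ Acard := by
    rw [← c2]
    exact List.countP_mono_left (fun d _ h => by
      simp only [Bool.and_eq_true] at h; exact h.2)
  have hsum : Bcard + Acard = n := by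
    rw [hBcard, hAcard, Finset.card_filter_add_card_filter_not, Finset.card_univ,
      Fintype.card_fin]
  have hA : Acard ≤ a := by
    rw [hAcard]
    calc (Finset.univ.filter (fun x : Fin n => ¬ a ≤ (x : ℕ))).card
        ≤ (Finset.range a).card :=
          Finset.card_le_card_of_injOn (fun x => (x : ℕ))
            (fun x hx => by
              simp only [Finset.mem_coe, Finset.mem_filter, not_le] at hx
              exact Finset.mem_range.2 hx.2)
            (fun x _ y _ h => Fin.val_injective h)
      _ = a := Finset.card_range a
  have hBB : n - 2 * a ≤ cntBB := by omega
  -- now edges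
  set E := (L.filter (fun d => pB d.fst && pB d.snd)).map (·.edge) with hE
  have hlen : E.length = cntBB := by
    rw [hE, List.length_map, hcntBB, List.countP_eq_length_filter]
  have hsub : E.Sublist w.edges := by
    rw [hE]
    exact (List.filter_sublist (l := L)).map _
  have hnodupE : E.Nodup := hsub.nodup hw.isCycle.edges_nodup
  have hmem : ∀ e ∈ E, e ∈ G.edgeSet ∧ ∀ x ∈ e, a ≤ (x : ℕ) := by
    intro e he
    rw [hE, List.mem_map] at he
    obtain ⟨d, hd, rfl⟩ := he
    rw [List.mem_filter] at hd
    obtain ⟨hdL, hdBB⟩ := hd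
    simp only [Bool.and_eq_true, hpB, decide_eq_true_eq] at hdBB
    have hadj : (completeBip n a ⊔ G).Adj d.fst d.snd := d.adj
    rw [SimpleGraph.sup_adj] at hadj
    have hG : G.Adj d.fst d.snd := by
      rcases hadj with h | h
      · exfalso
        have : ¬ ((d.fst : ℕ) < a) := not_lt.2 hdBB.1
        have h2 : ¬ ((d.snd : ℕ) < a) := not_lt.2 hdBB.2
        exact (h : ((d.fst : ℕ) < a) ≠ ((d.snd : ℕ) < a)) (by simp [this, h2])
      · exact h
    constructor
    · rw [SimpleGraph.Dart.edge]
      exact hG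
    · intro x hx
      rw [SimpleGraph.Dart.edge, Sym2.mem_iff] at hx
      rcases hx with rfl | rfl
      · exact hdBB.1
      · exact hdBB.2
  have hfin : {e : Sym2 (Fin n) | e ∈ G.edgeSet ∧ ∀ x ∈ e, a ≤ (x : ℕ)}.Finite :=
    Set.toFinite _
  calc n - 2 * a ≤ cntBB := hBB
    _ = E.length := hlen.symm
    _ = E.toFinset.card := (List.toFinset_card_of_nodup hnodupE).symm
    _ = (↑E.toFinset : Set (Sym2 (Fin n))).ncard := (Set.ncard_coe_finset _).symm
    _ ≤ _ := by
        apply Set.ncard_le_ncard _ hfin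
        intro e he
        simp only [Finset.mem_coe, List.mem_toFinset] at he
        exact hmem e he


lemma exists_perm_pair {β : Type*} [DecidableEq β] {u v u' v' : β} (h : u ≠ v) (h' : u' ≠ v') :
    ∃ σ : Equiv.Perm β, σ u = u' ∧ σ v = v' := by
  classical
  set σ₁ := Equiv.swap u u' with hσ₁
  have hu1 : σ₁ u = u' := Equiv.swap_apply_left u u'
  set v₁ := σ₁ v with hv₁def
  have hv₁ : v₁ ≠ u' := by
    intro hc
    have : σ₁ v = σ₁ u := by rw [hu1, ← hc]
    exact h (σ₁.injective this).symm
  refine ⟨σ₁.trans (Equiv.swap v₁ v'), ?_, ?_⟩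
  · simp only [Equiv.trans_apply, hu1]
    exact Equiv.swap_apply_of_ne_of_ne hv₁.symm h'
  · simp only [Equiv.trans_apply, ← hv₁def]
    exact Equiv.swap_apply_left v₁ v'

lemma isRegular_comap {n d : ℕ} (σ : Equiv.Perm (Fin n)) (G : SimpleGraph (Fin n))
    (h : IsRegularGraph G d) : IsRegularGraph (G.comap ⇑σ) d := by
  intro x
  have hset : (G.comap ⇑σ).neighborSet x = ⇑σ ⁻¹' (G.neighborSet (σ x)) := by
    ext y; simp [SimpleGraph.neighborSet]
  have himg : ⇑σ ⁻¹' (G.neighborSet (σ x)) = ⇑σ.symm '' (G.neighborSet (σ x)) := by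
    ext y; simp [Equiv.symm_apply_eq, eq_comm]
  rw [hset, himg, Set.ncard_image_of_injective _ σ.symm.injective]
  exact h _

lemma comap_comap_symm {n : ℕ} (σ : Equiv.Perm (Fin n)) (G : SimpleGraph (Fin n)) :
    (G.comap ⇑σ.symm).comap ⇑σ = G := by
  ext x y; simp

lemma card_adj_pair {n : ℕ} {u v u' v' : Fin n} (h : u ≠ v) (h' : u' ≠ v') :
    Nat.card {G : SimpleGraph (Fin n) // IsRegularGraph G 1 ∧ G.Adj u v} =
    Nat.card {G : SimpleGraph (Fin n) // IsRegularGraph G 1 ∧ G.Adj u' v'} := by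
  obtain ⟨σ, hu, hv⟩ := exists_perm_pair h h'
  apply Nat.card_congr
  refine Equiv.subtypeEquiv σ.simpleGraph (fun G => ?_)
  rw [Equiv.simpleGraph_apply]
  constructor
  · rintro ⟨hreg, hadj⟩
    refine ⟨isRegular_comap σ.symm G hreg, ?_⟩
    rw [SimpleGraph.comap_adj]
    have h1 : σ.symm u' = u := by rw [← hu, Equiv.symm_apply_apply]
    have h2 : σ.symm v' = v := by rw [← hv, Equiv.symm_apply_apply]
    rw [h1, h2]; exact hadj
  · rintro ⟨hreg, hadj⟩
    have := isRegular_comap σ (G.comap ⇑σ.symm) hreg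
    rw [comap_comap_symm] at this
    refine ⟨this, ?_⟩
    rw [SimpleGraph.comap_adj] at hadj
    have h1 : σ.symm u' = u := by rw [← hu, Equiv.symm_apply_apply]
    have h2 : σ.symm v' = v := by rw [← hv, Equiv.symm_apply_apply]
    rwa [h1, h2] at hadj



def stdMatch (m : ℕ) : SimpleGraph (Fin (2*m)) where
  Adj u v := u ≠ v ∧ (u : ℕ) / 2 = (v : ℕ) / 2
  symm := ⟨fun _ _ ⟨h1, h2⟩ => ⟨h1.symm, h2.symm⟩⟩
  loopless := ⟨fun _ ⟨h, _⟩ => h rfl⟩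

lemma stdMatch_regular (m : ℕ) : IsRegularGraph (stdMatch m) 1 := by
  intro v
  have hv : (v : ℕ) < 2*m := v.isLt
  set p : Fin (2*m) := ⟨2*((v:ℕ)/2) + 1 - (v:ℕ)%2, by omega⟩ with hp
  have hset : (stdMatch m).neighborSet v = {p} := by
    ext u
    have hu : (u : ℕ) < 2*m := u.isLt
    simp only [SimpleGraph.mem_neighborSet, Set.mem_singleton_iff, stdMatch]
    constructor
    · rintro ⟨hne, hdiv⟩
      have hne' : (v : ℕ) ≠ (u : ℕ) := fun hh => hne (Fin.ext hh)
      apply Fin.ext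
      simp only [hp]
      omega
    · intro hpu
      subst hpu
      refine ⟨fun hh => ?_, by simp only [hp]; omega⟩
      have := congrArg Fin.val hh
      simp only [hp] at this
      omega
  rw [hset, Set.ncard_singleton]

lemma natCard_subtype {β : Type*} [Fintype β] (p : β → Prop) [DecidablePred p] :
    Nat.card {x // p x} = (Finset.univ.filter p).card := by
  rw [Nat.card_eq_fintype_card, Fintype.card_subtype]

lemma ncard_setOf {β : Type*} [Fintype β] (p : β → Prop) [DecidablePred p] :
    {x : β | p x}.ncard = (Finset.univ.filter p).card := by
  rw [Set.ncard_eq_toFinset_card', Set.toFinset_setOf]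

open scoped Classical in
lemma card_reg_partition {n : ℕ} (v₀ : Fin n) [NeZero n] :
    (Finset.univ.filter (fun G : SimpleGraph (Fin n) => IsRegularGraph G 1)).card =
      ∑ v' ∈ Finset.univ.erase v₀,
        (Finset.univ.filter
          (fun G : SimpleGraph (Fin n) => IsRegularGraph G 1 ∧ G.Adj v₀ v')).card := by
  classical
  rw [← Finset.card_biUnion]
  · congr 1
    ext G
    simp only [Finset.mem_biUnion, Finset.mem_filter, Finset.mem_univ, true_and,
      Finset.mem_erase]
    constructor
    · intro hreg
      obtain ⟨u, hu⟩ := Set.ncard_eq_one.mp (hreg v₀)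
      have hadj : G.Adj v₀ u := by
        rw [← SimpleGraph.mem_neighborSet, hu]
        exact rfl
      exact ⟨u, ⟨hadj.ne', trivial⟩, hreg, hadj⟩
    · rintro ⟨v', -, hreg, -⟩
      exact hreg
  · intro x hx y hy hxy
    simp only [Finset.disjoint_left, Finset.mem_filter, Finset.mem_univ, true_and]
    rintro G ⟨hreg, hadjx⟩ ⟨-, hadjy⟩
    obtain ⟨u, hu⟩ := Set.ncard_eq_one.mp (hreg v₀)
    have h1 : x = u := by
      have : x ∈ G.neighborSet v₀ := hadjx
      rwa [hu, Set.mem_singleton_iff] at this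
    have h2 : y = u := by
      have : y ∈ G.neighborSet v₀ := hadjy
      rwa [hu, Set.mem_singleton_iff] at this
    exact hxy (h1.trans h2.symm)

lemma card_filter_lt (n a : ℕ) (h : a ≤ n) :
    (Finset.univ.filter (fun x : Fin n => (x : ℕ) < a)).card = a := by
  have hb : (Finset.univ.filter (fun x : Fin n => (x : ℕ) < a)).card
      = (Finset.range a).card := by
    refine Finset.card_bij (fun x _ => (x : ℕ)) ?_ ?_ ?_
    · intro x hx
      simp only [Finset.mem_filter] at hx
      exact Finset.mem_range.2 hx.2
    · intro x _ y _ hxy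
      exact Fin.val_injective hxy
    · intro y hy
      rw [Finset.mem_range] at hy
      exact ⟨⟨y, lt_of_lt_of_le hy h⟩, by simp [hy], rfl⟩
  rw [hb, Finset.card_range]

lemma card_filter_ge (n a : ℕ) (h : a ≤ n) :
    (Finset.univ.filter (fun x : Fin n => a ≤ (x : ℕ))).card = n - a := by
  have h1 := Finset.card_filter_add_card_filter_not
    (s := (Finset.univ : Finset (Fin n))) (p := fun x : Fin n => (x : ℕ) < a)
  rw [card_filter_lt n a h, Finset.card_univ, Fintype.card_fin] at h1
  have h2 : (Finset.univ.filter (fun x : Fin n => ¬ (x : ℕ) < a)) =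
      (Finset.univ.filter (fun x : Fin n => a ≤ (x : ℕ))) := by
    ext x; simp [not_lt]
  rw [h2] at h1
  omega

end Stmt13

set_option maxHeartbeats 1000000 in
lemma Stmt13.key_ineq (α δ c nn x : ℝ) (h0 : 0 < α) (hhalf : α < 1/2)
    (hδ : δ = 2*(1-2*α) - (1-α)^2) (hδpos : 0 < δ)
    (e5 : 2*c*(1-2*α) = (1-α)^2 + δ/2) (hcpos : 1/2 ≤ c) (hc1 : c ≤ 1)
    (hδn : 20 ≤ δ * nn) (hnn2 : 2 ≤ nn)
    (haR1 : α * nn ≤ x) (haR2 : x < α * nn + 1) (ht8 : 8 ≤ nn - 2*x) :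
    (nn - x + 1) * (nn - x) ≤ c * (2 * (nn - 2*x) * (nn - 1)) := by
  have h12 : (0:ℝ) < 1-2*α := by nlinarith
  have hc0 : (0:ℝ) ≤ c := by linarith
  have hnn0 : (0:ℝ) ≤ nn := by linarith
  have hAB : nn - x ≤ (1-α)*nn := by nlinarith
  have hA0 : (0:ℝ) ≤ nn - x := by nlinarith
  have e1 : (nn - x + 1)*(nn - x) ≤ ((1-α)*nn+1)*((1-α)*nn) := by
    nlinarith [mul_nonneg (sub_nonneg.2 hAB) (by nlinarith : (0:ℝ) ≤ (nn - x) + (1-α)*nn + 1)]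
  have e2 : ((1-α)*nn+1)*((1-α)*nn) ≤ (1-α)^2*nn^2 + nn := by nlinarith
  have e3 : ((1-2*α)*nn-2) * (c*2*(nn-1)) ≤ c * (2 * (nn - 2*x) * (nn-1)) := by
    have hfac : (0:ℝ) ≤ c*2*(nn-1) := by nlinarith
    have hmono : (1-2*α)*nn-2 ≤ nn - 2*x := by nlinarith
    nlinarith [mul_le_mul_of_nonneg_right hmono hfac]
  have hKnn : (2*c*(1-2*α))*nn ≤ 2*nn := by
    have hone : c*(1-2*α) ≤ 1 := by nlinarith
    nlinarith
  have hcnn : c*nn ≤ nn := by nlinarith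
  have hexp : ((1-2*α)*nn-2) * (c*2*(nn-1))
      = (2*c*(1-2*α))*nn^2 - (2*c*(1-2*α))*nn - 4*c*nn + 4*c := by ring
  have e6 : 10*nn ≤ (δ/2)*nn^2 := by nlinarith
  have hKsq : (2*c*(1-2*α))*nn^2 = (1-α)^2*nn^2 + (δ/2)*nn^2 := by rw [e5]; ring
  have e4 : (1-α)^2*nn^2 + nn ≤ ((1-2*α)*nn-2) * (c*2*(nn-1)) := by
    rw [hexp]
    linarith [hKsq, hKnn, hcnn, e6, hc0, hnn0]
  linarith [e1, e2, e4, e3]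

lemma Stmt13.assemble (c tR Num Fc bR NR nn : ℝ) (htpos : 0 < tR) (hNR : 0 ≤ NR)
    (hNumR : Num ≤ Fc) (hNat : 2*tR*Fc ≤ (bR+1)*bR*NR)
    (hkey : (bR+1)*bR ≤ c*(2*tR*(nn-1))) :
    Num ≤ c * ((nn-1)*NR) := by
  have h2 : (bR+1)*bR*NR ≤ c*(2*tR*(nn-1))*NR := mul_le_mul_of_nonneg_right hkey hNR
  have h3 : 2*tR*Num ≤ 2*tR*(c*((nn-1)*NR)) := by nlinarith
  have h4 : 0 < 2*tR := by linarith
  exact le_of_mul_le_mul_left h3 h4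

set_option maxHeartbeats 2000000 in
/-- For every `0 < α < √2 − 1` there is a constant `c < 1` such that, for all sufficiently
large even `n`, if `H` is the complete bipartite graph on `[n]` with parts of sizes `⌈αn⌉`
and `n − ⌈αn⌉`, then the probability that `H ∪ G_{n,1}` is Hamiltonian is at most `c`. -/
theorem stmt13 (α : ℝ) (h0 : 0 < α) (h1 : α < Real.sqrt 2 - 1) :
    ∃ c : ℝ, c < 1 ∧ ∃ n₀ : ℕ, ∀ m : ℕ, n₀ ≤ 2 * m →
      probReg (2 * m) 1 (fun G =>
        ∃ (v : Fin (2 * m))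
          (w : (completeBip (2 * m) ⌈α * ((2 * m : ℕ) : ℝ)⌉₊ ⊔ G).Walk v v),
          w.IsHamiltonianCycle) ≤ c := by
  classical
  have hs2 : Real.sqrt 2 ^ 2 = 2 := Real.sq_sqrt (by norm_num)
  have hs0 : (0:ℝ) ≤ Real.sqrt 2 := Real.sqrt_nonneg 2
  have hhalf : α < 1/2 := by nlinarith [sq_nonneg (Real.sqrt 2 - 3/2)]
  set δ : ℝ := 2*(1-2*α) - (1-α)^2 with hδ
  have h12 : (0:ℝ) < 1-2*α := by linarith
  have hα1 : 1 + α < Real.sqrt 2 := by linarith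
  have hδpos : 0 < δ := by nlinarith [mul_lt_mul'' hα1 hα1 (by linarith) (by linarith)]
  have hδle : δ ≤ 2*(1-2*α) := by nlinarith [sq_nonneg (1-α)]
  set c : ℝ := 1 - δ/(4*(1-2*α)) with hc
  have hcdiv : δ/(4*(1-2*α)) ≤ 1/2 := by
    rw [div_le_iff₀ (by linarith)]; linarith
  have hcpos : (1:ℝ)/2 ≤ c := by rw [hc]; linarith
  have hclt : c < 1 := by
    have : 0 < δ/(4*(1-2*α)) := div_pos hδpos (by linarith)
    rw [hc]; linarith
  have hc1 : c ≤ 1 := le_of_lt hclt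
  refine ⟨c, hclt, ⌈(20:ℝ)/δ⌉₊ + 2, fun m hm => ?_⟩
  set n : ℕ := 2*m with hn
  set a : ℕ := ⌈α * (n : ℝ)⌉₊ with ha
  have hn2 : 2 ≤ n := le_trans (by omega) hm
  have hnR : (20:ℝ)/δ ≤ (n:ℝ) := by
    calc (20:ℝ)/δ ≤ (⌈(20:ℝ)/δ⌉₊ : ℝ) := Nat.le_ceil _
    _ ≤ (n:ℝ) := by exact_mod_cast le_trans (by omega) hm
  have hδn : (20:ℝ) ≤ δ * (n:ℝ) := by
    rw [div_le_iff₀ hδpos] at hnR; nlinarith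
  have haR1 : α * (n:ℝ) ≤ (a:ℝ) := Nat.le_ceil _
  have haR2 : (a:ℝ) < α * (n:ℝ) + 1 := Nat.ceil_lt_add_one (by positivity)
  have hnn2 : (2:ℝ) ≤ (n:ℝ) := by exact_mod_cast hn2
  have ht8 : (8:ℝ) ≤ (n:ℝ) - 2*(a:ℝ) := by nlinarith
  have htn : 2*a + 8 ≤ n := by
    have hcast : ((2*a + 8 : ℕ) : ℝ) ≤ (n:ℝ) := by push_cast; linarith
    exact_mod_cast hcast
  have han : a ≤ n := by omega
  set t : ℕ := n - 2*a with hts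
  set b : ℕ := n - a with hbs
  have htpos : 0 < t := by omega
  have htR : (t:ℝ) = (n:ℝ) - 2*(a:ℝ) := by
    rw [hts, Nat.cast_sub (by omega)]; push_cast; ring
  have hbR : (b:ℝ) = (n:ℝ) - (a:ℝ) := by
    rw [hbs, Nat.cast_sub han]
  -- vertices
  set x0 : Fin n := ⟨0, by omega⟩ with hx0
  set x1 : Fin n := ⟨1, by omega⟩ with hx1
  have hx01 : x0 ≠ x1 := by
    intro hh
    have := congrArg Fin.val hh
    simp only [hx0, hx1] at this
    omega
  -- counting quantities
  set N : ℕ := (Finset.univ.filter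
    (fun G : SimpleGraph (Fin n) => IsRegularGraph G 1 ∧ G.Adj x0 x1)).card with hN
  set MS : Finset (SimpleGraph (Fin n)) :=
    Finset.univ.filter (fun G : SimpleGraph (Fin n) => IsRegularGraph G 1) with hMS
  set XBB : SimpleGraph (Fin n) → ℕ := fun G => (Finset.univ.filter
    (fun e : Sym2 (Fin n) => e ∈ G.edgeSet ∧ ∀ x ∈ e, a ≤ (x:ℕ))).card with hXBB
  set Bf : Finset (Fin n) := Finset.univ.filter (fun x : Fin n => a ≤ (x:ℕ)) with hBf
  have hNpos : 1 ≤ N := by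
    rw [hN, Nat.succ_le_iff, Finset.card_pos]
    refine ⟨Stmt13.stdMatch m, ?_⟩
    simp only [Finset.mem_filter, Finset.mem_univ, true_and]
    refine ⟨Stmt13.stdMatch_regular m, hx01, ?_⟩
    show (x0 : ℕ) / 2 = (x1 : ℕ) / 2
    simp [hx0, hx1]
  have hpairN : ∀ u v : Fin n, u ≠ v →
      (Finset.univ.filter
        (fun G : SimpleGraph (Fin n) => IsRegularGraph G 1 ∧ G.Adj u v)).card = N := by
    intro u v huv
    rw [hN, ← Stmt13.natCard_subtype, ← Stmt13.natCard_subtype]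
    exact Stmt13.card_adj_pair huv hx01
  haveI : NeZero n := ⟨by omega⟩
  have hMScard : MS.card = (n-1) * N := by
    rw [hMS, Stmt13.card_reg_partition x0]
    rw [Finset.sum_congr rfl (fun v' hv' => hpairN x0 v'
      (Ne.symm (Finset.mem_erase.mp hv').1))]
    rw [Finset.sum_const, Finset.card_erase_of_mem (Finset.mem_univ _),
      Finset.card_univ, Fintype.card_fin, smul_eq_mul]
  set F : Finset (SimpleGraph (Fin n)) := MS.filter (fun G => t ≤ XBB G) with hF
  have hNum : Nat.card {G : SimpleGraph (Fin n) // IsRegularGraph G 1 ∧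
      (∃ (v : Fin n) (w : (completeBip n a ⊔ G).Walk v v), w.IsHamiltonianCycle)} ≤ F.card := by
    rw [Stmt13.natCard_subtype]
    apply Finset.card_le_card
    intro G hG
    simp only [Finset.mem_filter, Finset.mem_univ, true_and] at hG
    obtain ⟨hreg, v, w, hw⟩ := hG
    rw [hF, Finset.mem_filter]
    refine ⟨by rw [hMS]; simp only [Finset.mem_filter, Finset.mem_univ, true_and]; exact hreg, ?_⟩
    have hle := Stmt13.ham_bb G hw
    rw [Stmt13.ncard_setOf] at hle
    rw [hXBB, hts]
    exact hle
  have hMarkov : t * F.card ≤ ∑ G ∈ MS, XBB G := by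
    calc t * F.card = F.card • t := by rw [smul_eq_mul, mul_comm]
    _ ≤ ∑ G ∈ F, XBB G :=
        Finset.card_nsmul_le_sum F XBB t (fun G hG => (Finset.mem_filter.mp hG).2)
    _ ≤ ∑ G ∈ MS, XBB G := Finset.sum_le_sum_of_subset (Finset.filter_subset _ _)
  have hXBBalt : ∀ G : SimpleGraph (Fin n),
      XBB G = (Bf.sym2.filter (fun e => e ∈ G.edgeSet)).card := by
    intro G
    have hfeq : (Finset.univ.filter
        (fun e : Sym2 (Fin n) => e ∈ G.edgeSet ∧ ∀ x ∈ e, a ≤ (x:ℕ)))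
        = Bf.sym2.filter (fun e => e ∈ G.edgeSet) := by
      ext e
      simp only [Finset.mem_filter, Finset.mem_univ, true_and, Finset.mem_sym2_iff, hBf]
      tauto
    simp only [hXBB]
    rw [hfeq]
  have hswap : ∑ G ∈ MS, XBB G =
      ∑ e ∈ Bf.sym2, (MS.filter (fun G => e ∈ G.edgeSet)).card := by
    simp_rw [hXBBalt, Finset.card_filter]
    exact Finset.sum_comm
  have hterm : ∀ e ∈ Bf.sym2, (MS.filter (fun G => e ∈ G.edgeSet)).card ≤ N := by
    intro e _
    induction e using Sym2.inductionOn with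
    | hf u v =>
      by_cases huv : u = v
      · subst huv
        have hempty : MS.filter (fun G => s(u,u) ∈ G.edgeSet) = ∅ := by
          ext G
          simp [SimpleGraph.mem_edgeSet]
        rw [hempty, Finset.card_empty]
        exact Nat.zero_le N
      · have heq : MS.filter (fun G => s(u,v) ∈ G.edgeSet) =
            Finset.univ.filter
              (fun G : SimpleGraph (Fin n) => IsRegularGraph G 1 ∧ G.Adj u v) := by
          rw [hMS, Finset.filter_filter]
          ext G
          simp [SimpleGraph.mem_edgeSet]
        rw [heq, hpairN u v huv]
  have hsum_le : ∑ G ∈ MS, XBB G ≤ Bf.sym2.card * N := by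
    rw [hswap]
    calc ∑ e ∈ Bf.sym2, (MS.filter (fun G => e ∈ G.edgeSet)).card
        ≤ ∑ _e ∈ Bf.sym2, N := Finset.sum_le_sum hterm
      _ = Bf.sym2.card * N := by rw [Finset.sum_const, smul_eq_mul]
  have hBfcard : Bf.card = b := by
    rw [hBf, Stmt13.card_filter_ge n a han, hbs]
  have hdvd : 2 ∣ (b+1)*b := by
    rw [mul_comm]
    exact (Nat.even_mul_succ_self b).two_dvd
  have hsym2 : 2 * Bf.sym2.card = (b+1)*b := by
    rw [Finset.card_sym2, hBfcard, Nat.choose_two_right]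
    simp only [Nat.add_sub_cancel]
    exact Nat.mul_div_cancel' hdvd
  -- the big ℕ inequality
  have hNat : 2 * t * F.card ≤ (b+1) * b * N := by
    calc 2 * t * F.card = 2 * (t * F.card) := by ring
    _ ≤ 2 * ∑ G ∈ MS, XBB G := by omega
    _ ≤ 2 * (Bf.sym2.card * N) := by omega
    _ = (2 * Bf.sym2.card) * N := by ring
    _ = (b+1) * b * N := by rw [hsym2]
  -- the real key inequality
  have hkey : ((b:ℝ)+1) * (b:ℝ) ≤ c * (2 * (t:ℝ) * ((n:ℝ)-1)) := by
    rw [htR, hbR]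
    have e5 : 2*c*(1-2*α) = (1-α)^2 + δ/2 := by
      have h1c : (1 - c) = δ/(4*(1-2*α)) := by rw [hc]; ring
      have hδeq : δ = (1 - c)*(4*(1-2*α)) := by
        rw [h1c, div_mul_cancel₀ _ (ne_of_gt (by linarith : (0:ℝ) < 4*(1-2*α)))]
      linear_combination hδeq/2 - hδ
    exact Stmt13.key_ineq α δ c (n:ℝ) (a:ℝ) h0 hhalf hδ hδpos e5 hcpos hc1 hδn hnn2
      haR1 haR2 ht8
  -- assemble
  unfold probReg
  have hden : (Nat.card {G : SimpleGraph (Fin n) // IsRegularGraph G 1} : ℝ)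
      = ((n:ℝ)-1) * (N:ℝ) := by
    rw [Stmt13.natCard_subtype, ← hMS, hMScard]
    rw [Nat.cast_mul, Nat.cast_sub (by omega)]
    norm_num
  rw [hden]
  have hdpos : (0:ℝ) < ((n:ℝ)-1) * (N:ℝ) := by
    have : (1:ℝ) ≤ (N:ℝ) := by exact_mod_cast hNpos
    nlinarith
  rw [div_le_iff₀ hdpos]
  have hNumR : (Nat.card {G : SimpleGraph (Fin n) // IsRegularGraph G 1 ∧
      (∃ (v : Fin n) (w : (completeBip n a ⊔ G).Walk v v), w.IsHamiltonianCycle)} : ℝ)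
      ≤ (F.card : ℝ) := by exact_mod_cast hNum
  have hNatR : 2 * (t:ℝ) * (F.card:ℝ) ≤ ((b:ℝ)+1) * (b:ℝ) * (N:ℝ) := by
    exact_mod_cast hNat
  have htRpos : (0:ℝ) < (t:ℝ) := by exact_mod_cast htpos
  have hNR : (0:ℝ) ≤ (N:ℝ) := Nat.cast_nonneg N
  exact Stmt13.assemble c (t:ℝ) _ (F.card:ℝ) (b:ℝ) (N:ℝ) (n:ℝ) htRpos hNR hNumR
    (by nlinarith [hNatR]) hkey
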